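/- Let x = (x_n) be a nonzero element of the c_0-direct sum ⊕_0 X_n and f = (f_n) ∈ ⊕_1 X_n*. Then f is a support functional of x if and only if there exist λ_n ≥ 0 with ∑_{‖x_n‖ = ‖x‖_0} λ_n = 1 such that f_n = λ_n g_n with g_n ∈ J(x_n) for each n with ‖x_n‖ = ‖x‖_0, and f_n = 0 otherwise. -/

import Mathlib

open scoped ENNReal
open Filter

/-- The c₀-direct sum of a sequence of normed spaces: the subspace of the ℓ_∞-direct sum
consisting of those sequences whose coordinate norms tend to zero, with the sup norm. -/
noncomputable def c0Sum (E : ℕ → Type*) [∀ n, NormedAddCommGroup (E n)]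
    [∀ n, NormedSpace ℝ (E n)] : Submodule ℝ (lp E ∞) where
  carrier := {f | Tendsto (fun n => ‖f n‖) atTop (nhds 0)}
  add_mem' := by
    intro f g hf hg
    refine squeeze_zero (fun n => norm_nonneg _) (fun n => ?_) (by simpa using hf.add hg)
    simpa using norm_add_le (f n) (g n)
  zero_mem' := by
    show Tendsto (fun n => ‖(0 : lp E ∞) n‖) atTop (nhds 0)
    simp only [lp.coeFn_zero, Pi.zero_apply, norm_zero]
    exact tendsto_const_nhds
  smul_mem' := by
    intro c f hf
    refine squeeze_zero (fun n => norm_nonneg _) (fun n => ?_) (by simpa using hf.const_mul ‖c‖)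
    simp [norm_smul]

/-- For a nonzero `x = (x_n)` in the c₀-direct sum ⊕_0 E_n, an element `f = (f_n)` of
⊕_1 E_n* is a support functional of `x` iff there are `λ_n ≥ 0` summing to 1 over the set
of indices where `‖x_n‖ = ‖x‖` such that `f_n = λ_n g_n` with `g_n` a norm-one support
functional of `x_n` on that set, and `f_n = 0` elsewhere. -/
theorem stmt12 (E : ℕ → Type*) [∀ n, NormedAddCommGroup (E n)]
    [∀ n, NormedSpace ℝ (E n)]
    (x : c0Sum E) (hx : x ≠ 0) (f : lp (fun n => E n →L[ℝ] ℝ) 1) :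
    (‖f‖ = 1 ∧ (∑' n, f n ((x : lp E ∞) n)) = ‖x‖) ↔
      ∃ lam : ℕ → ℝ, (∀ n, 0 ≤ lam n) ∧
        (∑' m : {n // ‖(x : lp E ∞) n‖ = ‖x‖}, lam m) = 1 ∧
        (∀ n, ‖(x : lp E ∞) n‖ = ‖x‖ →
          ∃ g : E n →L[ℝ] ℝ, ‖g‖ = 1 ∧ g ((x : lp E ∞) n) = ‖(x : lp E ∞) n‖ ∧
            f n = lam n • g) ∧
        (∀ n, ‖(x : lp E ∞) n‖ ≠ ‖x‖ → f n = 0) := by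
  set X := (x : lp E ∞) with hX
  have hxpos : 0 < ‖x‖ := norm_pos_iff.mpr hx
  have hXx : ‖X‖ = ‖x‖ := rfl
  have hxle : ∀ n, ‖X n‖ ≤ ‖x‖ := fun n => hXx ▸ lp.norm_apply_le_norm ENNReal.top_ne_zero X n
  have hfnorm : ‖f‖ = ∑' n, ‖f n‖ := by
    rw [lp.norm_eq_tsum_rpow (by norm_num) f]; simp [Real.rpow_one]
  have hsum : Summable fun n => ‖f n‖ := by
    simpa using (lp.memℓp f).summable (p := 1) (by norm_num)
  have hbd : ∀ n, ‖f n (X n)‖ ≤ ‖f n‖ * ‖x‖ := fun n =>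
    ((f n).le_opNorm _).trans (mul_le_mul_of_nonneg_left (hxle n) (norm_nonneg _))
  have hsum2 : Summable fun n => f n (X n) :=
    (hsum.mul_right ‖x‖).of_norm_bounded hbd
  constructor
  · rintro ⟨hf1, hfx⟩
    have hsuma : Summable fun n => ‖f n‖ * ‖x‖ - f n (X n) := (hsum.mul_right _).sub hsum2
    have htsa : (∑' n, (‖f n‖ * ‖x‖ - f n (X n))) = 0 := by
      rw [Summable.tsum_sub (hsum.mul_right _) hsum2, tsum_mul_right, ← hfnorm, hf1, one_mul, hfx,
        sub_self]
    have ha : ∀ n, 0 ≤ ‖f n‖ * ‖x‖ - f n (X n) := fun n => by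
      have := (le_abs_self (f n (X n))).trans (hbd n)
      linarith
    have heach : ∀ n, f n (X n) = ‖f n‖ * ‖x‖ := by
      intro n
      have h1 : ‖f n‖ * ‖x‖ - f n (X n) ≤ 0 := htsa ▸ Summable.le_tsum hsuma n (fun m _ => ha m)
      linarith [ha n]
    have hoff : ∀ n, ‖X n‖ ≠ ‖x‖ → f n = 0 := by
      intro n hn
      by_contra h
      have hfn : 0 < ‖f n‖ := norm_pos_iff.mpr h
      have hlt : ‖X n‖ < ‖x‖ := lt_of_le_of_ne (hxle n) hn
      have h2 : f n (X n) ≤ ‖f n‖ * ‖X n‖ :=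
        (le_abs_self _).trans ((f n).le_opNorm _)
      nlinarith [heach n]
    refine ⟨fun n => ‖f n‖, fun n => norm_nonneg _, ?_, ?_, hoff⟩
    · have hsupp : Function.support (fun n => ‖f n‖) ⊆ {n | ‖X n‖ = ‖x‖} := by
        intro n hn
        by_contra hcon
        exact hn (by simp [hoff n hcon])
      exact (tsum_subtype_eq_of_support_subset hsupp).trans (hfnorm ▸ hf1)
    · intro n hn
      rcases eq_or_ne ‖f n‖ 0 with h0 | h0
      · have hxn0 : X n ≠ 0 := by
          intro h
          rw [h, norm_zero] at hn
          exact hxpos.ne hn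
        obtain ⟨g, hg1, hg2⟩ := exists_dual_vector ℝ (X n) (norm_ne_zero_iff.mpr hxn0)
        exact ⟨g, hg1, by exact_mod_cast hg2, by simp [norm_eq_zero.mp h0, h0]⟩
      · refine ⟨‖f n‖⁻¹ • f n, ?_, ?_, ?_⟩
        · refine (norm_smul (‖f n‖⁻¹) (f n)).trans ?_
          rw [norm_inv, norm_norm]
          exact inv_mul_cancel₀ h0
        · rw [ContinuousLinearMap.smul_apply, smul_eq_mul, heach n, hn]
          field_simp
        · rw [smul_smul, mul_inv_cancel₀ h0, one_smul]
  · rintro ⟨lam, hlam0, hlamsum, hmax, hoff⟩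
    have key : ∀ n, ‖X n‖ = ‖x‖ → ‖f n‖ = lam n ∧ f n (X n) = lam n * ‖x‖ := by
      intro n hn
      obtain ⟨g, hg1, hg2, hfg⟩ := hmax n hn
      refine ⟨?_, ?_⟩
      · rw [hfg]
        refine (norm_smul (lam n) g).trans ?_
        rw [hg1, mul_one, Real.norm_eq_abs]
        exact abs_of_nonneg (hlam0 n)
      · rw [hfg, ContinuousLinearMap.smul_apply, smul_eq_mul, hg2, hn]
    have hsuppn : Function.support (fun n => ‖f n‖) ⊆ {n | ‖X n‖ = ‖x‖} := by
      intro n hn; by_contra hcon; exact hn (by simp [hoff n hcon])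
    have hsuppv : Function.support (fun n => f n (X n)) ⊆ {n | ‖X n‖ = ‖x‖} := by
      intro n hn; by_contra hcon; exact hn (by simp [hoff n hcon])
    constructor
    · rw [hfnorm]
      refine (tsum_subtype_eq_of_support_subset hsuppn).symm.trans ?_
      exact (tsum_congr (fun m : {n | ‖X n‖ = ‖x‖} => (key m m.2).1)).trans hlamsum
    · refine (tsum_subtype_eq_of_support_subset hsuppv).symm.trans ?_
      refine (tsum_congr (fun m : {n | ‖X n‖ = ‖x‖} => (key m m.2).2)).trans ?_
      rw [tsum_mul_right]
      have : (∑' m : {n | ‖X n‖ = ‖x‖}, lam m) = 1 := hlamsum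
      rw [this, one_mul]
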